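/- For all n ≥ 0, g(4n+1) = 3·g(n), where g(n) is the number of odd coefficients of (1+x+x^2)^n. -/

import Mathlib

open Polynomial

/-- The number of odd coefficients of a polynomial over ℤ. -/
noncomputable def oddCoeffCount (p : Polynomial ℤ) : ℕ :=
  (p.support.filter fun j => Odd (p.coeff j)).card

noncomputable def g (n : ℕ) : ℕ := oddCoeffCount ((1 + X + X ^ 2) ^ n)

lemma g_eq (n : ℕ) :
    g n = (((1 + X + X ^ 2 : Polynomial (ZMod 2))) ^ n).support.card := by
  have hmap : (((1 + X + X ^ 2 : Polynomial ℤ) ^ n).map (Int.castRingHom (ZMod 2)))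
      = (1 + X + X ^ 2 : Polynomial (ZMod 2)) ^ n := by
    simp [Polynomial.map_pow, Polynomial.map_add, Polynomial.map_one, Polynomial.map_X]
  rw [g, oddCoeffCount, ← hmap]
  congr 1
  ext m
  simp only [Finset.mem_filter, mem_support_iff, coeff_map, Int.coe_castRingHom, ne_eq,
    ZMod.intCast_zmod_eq_zero_iff_dvd, Int.odd_iff]
  omega

lemma sq_eq_expand (f : Polynomial (ZMod 2)) : f ^ 2 = expand (ZMod 2) 2 f := by
  have h := Polynomial.map_frobenius_expand 2 f
  rwa [ZMod.frobenius_zmod, Polynomial.map_id, eq_comm] at h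

lemma pow4_eq_expand (f : Polynomial (ZMod 2)) : f ^ 4 = expand (ZMod 2) 4 f := by
  have : f ^ 4 = (f ^ 2) ^ 2 := by ring
  rw [this, sq_eq_expand, sq_eq_expand, Polynomial.expand_expand]

lemma mem_support_key (f : Polynomial (ZMod 2)) (m : ℕ) :
    m ∈ ((expand (ZMod 2) 4 f) * (1 + X + X ^ 2)).support ↔
      m % 4 ≤ 2 ∧ m / 4 ∈ f.support := by
  rw [mem_support_iff, mem_support_iff]
  have e : (expand (ZMod 2) 4 f) * (1 + X + X ^ 2) =
      expand (ZMod 2) 4 f * X ^ 0 + expand (ZMod 2) 4 f * X ^ 1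
        + expand (ZMod 2) 4 f * X ^ 2 := by ring
  rw [e, coeff_add, coeff_add, coeff_mul_X_pow', coeff_mul_X_pow', coeff_mul_X_pow']
  simp only [Polynomial.coeff_expand (show 0 < 4 by norm_num)]
  have hm : m % 4 = 0 ∨ m % 4 = 1 ∨ m % 4 = 2 ∨ m % 4 = 3 := by omega
  rcases hm with h | h | h | h
  · split_ifs <;> first
      | (exfalso; omega)
      | (have hd : (m - 0) / 4 = m / 4 := by omega
         rw [hd]; simp [h])
  · split_ifs <;> first
      | (exfalso; omega)
      | (have hd : (m - 1) / 4 = m / 4 := by omega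
         rw [hd]; simp [h])
  · split_ifs <;> first
      | (exfalso; omega)
      | (have hd : (m - 2) / 4 = m / 4 := by omega
         rw [hd]; simp [h])
  · split_ifs <;> first
      | (exfalso; omega)
      | simp [h]

lemma card_key (f : Polynomial (ZMod 2)) :
    ((expand (ZMod 2) 4 f) * (1 + X + X ^ 2)).support.card = 3 * f.support.card := by
  have hset : ((expand (ZMod 2) 4 f) * (1 + X + X ^ 2)).support
      = (f.support ×ˢ ({0, 1, 2} : Finset ℕ)).image (fun p => 4 * p.1 + p.2) := by
    ext m
    simp only [Finset.mem_image, Finset.mem_product, Finset.mem_insert, Finset.mem_singleton,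
      mem_support_key]
    constructor
    · rintro ⟨h1, h2⟩
      exact ⟨(m / 4, m % 4), ⟨h2, by omega⟩, by omega⟩
    · rintro ⟨⟨j, r⟩, ⟨hj, hr⟩, rfl⟩
      have hr2 : r ≤ 2 := by rcases hr with h | h | h <;> omega
      refine ⟨by omega, ?_⟩
      have : (4 * j + r) / 4 = j := by omega
      rwa [this]
  rw [hset, Finset.card_image_of_injOn, Finset.card_product]
  · simp [mul_comm]
  · rintro ⟨a, b⟩ hab ⟨c, d⟩ hcd h
    simp only [Finset.mem_coe, Finset.mem_product, Finset.mem_insert, Finset.mem_singleton]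
      at hab hcd
    have hb : b ≤ 2 := by rcases hab.2 with h' | h' | h' <;> omega
    have hd : d ≤ 2 := by rcases hcd.2 with h' | h' | h' <;> omega
    simp only at h
    have : 4 * a + b = 4 * c + d := h
    simp only [Prod.mk.injEq]
    omega

theorem stmt_3 : ∀ n : ℕ, g (4 * n + 1) = 3 * g n := by
  intro n
  rw [g_eq, g_eq]
  have h4 : (1 + X + X ^ 2 : Polynomial (ZMod 2)) ^ (4 * n + 1)
      = expand (ZMod 2) 4 ((1 + X + X ^ 2) ^ n) * (1 + X + X ^ 2) := by
    rw [pow_succ, pow_mul', pow4_eq_expand]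
  rw [h4, card_key]
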